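/- Let n ≥ 1 and let γ_p : ℝⁿ → ℝ be the scoring function of a property p. Suppose that for all e, f ∈ ℝⁿ, γ_p((e+f)/2) > 0 holds if and only if γ_p(e) > 0 or γ_p(f) > 0 (the strict epistemic pooling principle for average pooling on all of ℝⁿ). Then either γ_p(e) > 0 for every e ∈ ℝⁿ, or γ_p(e) ≤ 0 for every e ∈ ℝⁿ. -/
import Mathlib


/-- If the strict epistemic pooling principle holds for average pooling
on all of ℝⁿ, then either every embedding satisfies p, or none does. -/
theorem avg_pooling_strict_trivial_on_univ (n : ℕ) (hn : 1 ≤ n)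
    (γ : (Fin n → ℝ) → ℝ)
    (hpool : ∀ e f : Fin n → ℝ, γ ((e + f) / 2) > 0 ↔ (γ e > 0 ∨ γ f > 0)) :
    (∀ e : Fin n → ℝ, γ e > 0) ∨ (∀ e : Fin n → ℝ, γ e ≤ 0) := by
  by_cases h : ∃ e, γ e > 0
  · obtain ⟨e, he⟩ := h
    left
    intro f
    have key : (e + (2 • f - e)) / 2 = f := by
      funext i
      simp [two_smul]
    have := (hpool e (2 • f - e)).mpr (Or.inl he)
    rwa [key] at this
  · right
    intro f
    push_neg at h
    exact h f
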